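/- Let 0 ≤ p₁ < 1/2 < p₂ ≤ 1 and c = min{1/2 − p₁, p₂ − 1/2}. For n ≥ 16 and ℓ ≤ n with (1/c²)·logₑ(n) ≤ ℓ, the number of binary sequences of length ℓ whose weight is not in [p₁ℓ, p₂ℓ] is at most 2^{ℓ+1}/n². Consequently, setting k = ℓ − 3 − log₂ n, there exists an injective map from this set of forbidden sequences into {0,1}^k. -/

import Mathlib

/-- Hamming weight of a binary sequence. -/
def wt (l : List Bool) : ℕ := l.count true

/-- The set of forbidden windows: sequences of length `ℓ` with weight outside `[p₁ℓ, p₂ℓ]`. -/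
def Forb (ℓ : ℕ) (p₁ p₂ : ℝ) : Set (List Bool) :=
  {x | x.length = ℓ ∧ ¬(p₁ * ℓ ≤ (wt x : ℝ) ∧ (wt x : ℝ) ≤ p₂ * ℓ)}

open Finset

/-- Weight of a function `Fin ℓ → Bool`. -/
def Wf {ℓ : ℕ} (f : Fin ℓ → Bool) : ℕ := (univ.filter (fun i => f i = true)).card

lemma wt_ofFn {ℓ : ℕ} (f : Fin ℓ → Bool) : wt (List.ofFn f) = Wf f := by
  rw [wt, List.ofFn_eq_map, List.count, List.countP_map, List.countP_eq_length_filter,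
    Wf, Finset.card, Finset.filter_val, Fin.univ_def]
  simp [Multiset.filter_coe, Function.comp_def]

lemma Wf_add_Wf_neg {ℓ : ℕ} (f : Fin ℓ → Bool) : Wf f + Wf (fun i => !(f i)) = ℓ := by
  classical
  have h : (univ.filter (fun i : Fin ℓ => (!(f i)) = true))
      = (univ.filter (fun i => ¬ (f i = true))) := by
    apply Finset.filter_congr; intro i _; simp
  rw [Wf, Wf, h, Finset.card_filter_add_card_filter_not]
  simp

lemma sum_pow_Wf (ℓ : ℕ) (r : ℝ) : ∑ f : Fin ℓ → Bool, r ^ Wf f = (1 + r) ^ ℓ := by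
  have h1 : ∀ f : Fin ℓ → Bool, r ^ Wf f = ∏ i : Fin ℓ, (if f i = true then r else 1) := by
    intro f
    rw [Finset.prod_ite, Finset.prod_const, Finset.prod_const, one_pow, mul_one, Wf]
  simp_rw [h1]
  have h2 : ((1 + r) ^ ℓ)
      = ∏ _i : Fin ℓ, ∑ b ∈ (univ : Finset Bool), (if b = true then r else 1) := by
    simp [Finset.prod_const, add_comm]
  rw [h2, Finset.prod_univ_sum, Fintype.piFinset_univ]

lemma chernoff (ℓ : ℕ) (c : ℝ) (hc : 0 < c) :
    ((univ.filter (fun f : Fin ℓ → Bool => (Wf f : ℝ) ≤ (1/2 - c) * ℓ)).card : ℝ)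
      ≤ 2 ^ ℓ * Real.exp (-2 * c ^ 2 * ℓ) := by
  classical
  set t : ℝ := 4 * c with ht
  have ht0 : 0 < t := by rw [ht]; linarith
  have key : ((univ.filter (fun f : Fin ℓ → Bool => (Wf f : ℝ) ≤ (1/2 - c) * ℓ)).card : ℝ)
      ≤ ∑ f : Fin ℓ → Bool, Real.exp (t * ((1/2 - c) * ℓ)) * Real.exp (-t) ^ Wf f := by
    rw [Finset.card_eq_sum_ones, Nat.cast_sum]
    refine le_trans (Finset.sum_le_sum ?_)
      (Finset.sum_le_sum_of_subset_of_nonneg (Finset.subset_univ _) ?_)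
    · intro f hf
      simp only [Finset.mem_filter] at hf
      rw [← Real.exp_nat_mul, ← Real.exp_add]
      push_cast
      apply Real.one_le_exp
      have h2 := hf.2
      nlinarith [h2, ht0]
    · intro f _ _
      positivity
  have hsum : ∑ f : Fin ℓ → Bool, Real.exp (t * ((1/2 - c) * ℓ)) * Real.exp (-t) ^ Wf f
      = Real.exp (t * ((1/2 - c) * ℓ)) * (1 + Real.exp (-t)) ^ ℓ := by
    rw [← Finset.mul_sum, sum_pow_Wf]
  have hbase : Real.exp (t * (1/2 - c)) * (1 + Real.exp (-t)) ≤ 2 * Real.exp (-2 * c ^ 2) := by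
    have e1 : Real.exp (t * (1/2 - c)) * (1 + Real.exp (-t))
        = Real.exp (-(4 * c ^ 2) + 2 * c) + Real.exp (-(4 * c ^ 2) + -(2 * c)) := by
      rw [mul_add, mul_one, ← Real.exp_add]
      congr 1
      · congr 1; rw [ht]; ring
      · congr 1; rw [ht]; ring
    rw [e1, Real.exp_add, Real.exp_add]
    have hcosh := Real.cosh_le_exp_half_sq (2 * c)
    rw [Real.cosh_eq] at hcosh
    have h2 : Real.exp (2 * c) + Real.exp (-(2 * c)) ≤ 2 * Real.exp ((2 * c) ^ 2 / 2) := by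
      linarith
    have e2 : ((2 : ℝ) * c) ^ 2 / 2 = 2 * c ^ 2 := by ring
    rw [e2] at h2
    have e3 : (2 : ℝ) * Real.exp (-2 * c ^ 2)
        = Real.exp (-(4 * c ^ 2)) * (2 * Real.exp (2 * c ^ 2)) := by
      rw [mul_comm (Real.exp (-(4 * c ^ 2))), mul_assoc, ← Real.exp_add]
      congr 2; ring
    rw [e3]
    calc Real.exp (-(4 * c ^ 2)) * Real.exp (2 * c) + Real.exp (-(4 * c ^ 2)) * Real.exp (-(2 * c))
        = Real.exp (-(4 * c ^ 2)) * (Real.exp (2 * c) + Real.exp (-(2 * c))) := by ring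
      _ ≤ Real.exp (-(4 * c ^ 2)) * (2 * Real.exp (2 * c ^ 2)) :=
          mul_le_mul_of_nonneg_left h2 (Real.exp_nonneg _)
  have hpow : Real.exp (t * ((1/2 - c) * ℓ)) * (1 + Real.exp (-t)) ^ ℓ
      ≤ 2 ^ ℓ * Real.exp (-2 * c ^ 2 * ℓ) := by
    have e4 : Real.exp (t * ((1/2 - c) * ℓ)) = Real.exp (t * (1/2 - c)) ^ ℓ := by
      rw [← Real.exp_nat_mul]; congr 1; ring
    have e5 : (2 : ℝ) ^ ℓ * Real.exp (-2 * c ^ 2 * ℓ) = (2 * Real.exp (-2 * c ^ 2)) ^ ℓ := by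
      rw [mul_pow, ← Real.exp_nat_mul]; congr 2; ring
    rw [e4, ← mul_pow, e5]
    apply pow_le_pow_left₀ (by positivity) hbase
  exact key.trans (hsum.le.trans hpow)

theorem stmt6 (n ℓ k : ℕ) (p₁ p₂ c : ℝ)
    (hp₁ : 0 ≤ p₁) (h₁ : p₁ < 1/2) (h₂ : (1:ℝ)/2 < p₂) (hp₂ : p₂ ≤ 1)
    (hc : c = min (1/2 - p₁) (p₂ - 1/2))
    (hn : 16 ≤ n) (hℓn : ℓ ≤ n) (hℓ : (1 / c^2) * Real.log n ≤ ℓ)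
    (hk : (k : ℝ) = (ℓ : ℝ) - 3 - Real.logb 2 n) :
    (Nat.card (Forb ℓ p₁ p₂) : ℝ) ≤ 2^(ℓ+1) / n^2 ∧
      ∃ f : Forb ℓ p₁ p₂ → (Fin k → Bool), Function.Injective f := by
  classical
  have hc0 : 0 < c := by rw [hc]; apply lt_min <;> linarith
  have hcp₁ : p₁ ≤ 1/2 - c := by
    have := min_le_left (1/2 - p₁) (p₂ - 1/2); rw [← hc] at this; linarith
  have hcp₂ : 1/2 + c ≤ p₂ := by
    have := min_le_right (1/2 - p₁) (p₂ - 1/2); rw [← hc] at this; linarith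
  have hn0 : (0 : ℝ) < n := by
    have : (16 : ℝ) ≤ n := by exact_mod_cast hn
    linarith
  have hl0 : (0 : ℝ) ≤ ℓ := Nat.cast_nonneg ℓ
  set S : Finset (Fin ℓ → Bool) :=
    univ.filter (fun f => ¬(p₁ * ℓ ≤ (Wf f : ℝ) ∧ (Wf f : ℝ) ≤ p₂ * ℓ)) with hS
  -- Forb equals the coe of image of S under List.ofFn
  have himg : Forb ℓ p₁ p₂ = ↑(S.image (fun f => List.ofFn f)) := by
    ext x
    simp only [Forb, Set.mem_setOf_eq, Finset.coe_image, Set.mem_image, Finset.mem_coe, hS,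
      Finset.mem_filter, Finset.mem_univ, true_and]
    constructor
    · rintro ⟨hlen, hbad⟩
      have hofn : List.ofFn (fun i : Fin ℓ => x.get ⟨i.1, by rw [hlen]; exact i.2⟩) = x := by
        apply List.ext_get (by simp [hlen])
        intro i h1 h2
        simp [List.get_ofFn]
      refine ⟨_, ?_, hofn⟩
      have hw : wt x = Wf (fun i : Fin ℓ => x.get ⟨i.1, by rw [hlen]; exact i.2⟩) := by
        conv_lhs => rw [← hofn]
        exact wt_ofFn _
      rw [hw] at hbad
      exact hbad
    · rintro ⟨f, hf, rfl⟩
      exact ⟨List.length_ofFn, by rw [wt_ofFn]; exact hf⟩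
  have hcardS : Nat.card (Forb ℓ p₁ p₂) = S.card := by
    rw [himg, Nat.card_coe_set_eq, Set.ncard_coe_finset,
      Finset.card_image_of_injective _ List.ofFn_injective]
  -- split S into low and high weight parts
  set S₁ : Finset (Fin ℓ → Bool) := univ.filter (fun f => (Wf f : ℝ) < p₁ * ℓ) with hS₁
  set S₂ : Finset (Fin ℓ → Bool) := univ.filter (fun f => p₂ * ℓ < (Wf f : ℝ)) with hS₂
  set T : Finset (Fin ℓ → Bool) :=
    univ.filter (fun f => (Wf f : ℝ) ≤ (1/2 - c) * ℓ) with hT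
  have hsplit : S ⊆ S₁ ∪ S₂ := by
    intro f hf
    simp only [hS, Finset.mem_filter, Finset.mem_univ, true_and] at hf
    simp only [hS₁, hS₂, Finset.mem_union, Finset.mem_filter, Finset.mem_univ, true_and]
    rcases not_and_or.mp hf with h | h
    · left; exact not_le.mp h
    · right; exact not_le.mp h
  have hT1 : S₁ ⊆ T := by
    intro f hf
    simp only [hS₁, Finset.mem_filter, Finset.mem_univ, true_and] at hf
    simp only [hT, Finset.mem_filter, Finset.mem_univ, true_and]
    have : p₁ * ℓ ≤ (1/2 - c) * ℓ := mul_le_mul_of_nonneg_right hcp₁ hl0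
    linarith
  have hT2 : S₂.card ≤ T.card := by
    have hinjneg : Function.Injective (fun f : Fin ℓ → Bool => (fun i => !(f i))) := by
      intro f g h
      funext i
      have := congrFun h i
      simpa using this
    rw [← Finset.card_image_of_injective S₂ hinjneg]
    apply Finset.card_le_card
    intro g hg
    simp only [Finset.mem_image] at hg
    obtain ⟨f, hf, rfl⟩ := hg
    simp only [hS₂, Finset.mem_filter, Finset.mem_univ, true_and] at hf
    simp only [hT, Finset.mem_filter, Finset.mem_univ, true_and]
    have hsum := Wf_add_Wf_neg f
    have hcast : (Wf (fun i => !(f i)) : ℝ) = (ℓ : ℝ) - Wf f := by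
      have : ((Wf f + Wf (fun i => !(f i)) : ℕ) : ℝ) = (ℓ : ℝ) := by rw [hsum]
      push_cast at this
      linarith
    rw [hcast]
    have : (1/2 + c) * ℓ ≤ p₂ * ℓ := mul_le_mul_of_nonneg_right hcp₂ hl0
    linarith
  have hcount : (S.card : ℝ) ≤ 2 ^ (ℓ + 1) * Real.exp (-2 * c ^ 2 * ℓ) := by
    have h1 : S.card ≤ S₁.card + S₂.card :=
      le_trans (Finset.card_le_card hsplit) (Finset.card_union_le _ _)
    have h2 : (S₁.card : ℝ) ≤ 2 ^ ℓ * Real.exp (-2 * c ^ 2 * ℓ) :=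
      le_trans (by exact_mod_cast Finset.card_le_card hT1) (chernoff ℓ c hc0)
    have h3 : (S₂.card : ℝ) ≤ 2 ^ ℓ * Real.exp (-2 * c ^ 2 * ℓ) :=
      le_trans (by exact_mod_cast hT2) (chernoff ℓ c hc0)
    have h4 : ((S₁.card + S₂.card : ℕ) : ℝ) ≤ 2 ^ (ℓ + 1) * Real.exp (-2 * c ^ 2 * ℓ) := by
      push_cast
      rw [pow_succ]
      linarith
    calc (S.card : ℝ) ≤ ((S₁.card + S₂.card : ℕ) : ℝ) := by exact_mod_cast h1
      _ ≤ _ := h4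
  -- exp(-2c²ℓ) ≤ 1/n²
  have hexp : Real.exp (-2 * c ^ 2 * ℓ) ≤ ((n : ℝ) ^ 2)⁻¹ := by
    have hc2 : (0 : ℝ) < c ^ 2 := by positivity
    have hlogn : Real.log n ≤ c ^ 2 * ℓ := by
      have := mul_le_mul_of_nonneg_left hℓ hc2.le
      calc Real.log n = c ^ 2 * ((1 / c ^ 2) * Real.log n) := by field_simp
        _ ≤ c ^ 2 * ℓ := this
    have h5 : Real.exp (-2 * c ^ 2 * ℓ) ≤ Real.exp (-(2 * Real.log n)) := by
      apply Real.exp_le_exp.mpr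
      nlinarith
    have h6 : Real.exp (-(2 * Real.log n)) = ((n : ℝ) ^ 2)⁻¹ := by
      rw [Real.exp_neg, two_mul, Real.exp_add, Real.exp_log hn0, sq]
    rw [← h6]; exact h5
  have part1 : (Nat.card (Forb ℓ p₁ p₂) : ℝ) ≤ 2 ^ (ℓ + 1) / n ^ 2 := by
    rw [hcardS, div_eq_mul_inv]
    calc (S.card : ℝ) ≤ 2 ^ (ℓ + 1) * Real.exp (-2 * c ^ 2 * ℓ) := hcount
      _ ≤ 2 ^ (ℓ + 1) * ((n : ℝ) ^ 2)⁻¹ :=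
          mul_le_mul_of_nonneg_left hexp (by positivity)
  refine ⟨part1, ?_⟩
  -- part 2: injection
  have h2k : ((2 : ℝ)) ^ (k : ℕ) = 2 ^ (ℓ : ℕ) / (8 * n) := by
    rw [← Real.rpow_natCast 2 k, hk, sub_sub, Real.rpow_sub two_pos, Real.rpow_natCast,
      Real.rpow_add two_pos, Real.rpow_logb two_pos (by norm_num) hn0,
      show (3 : ℝ) = ((3 : ℕ) : ℝ) by norm_num, Real.rpow_natCast]
    norm_num
  have hle : (Nat.card (Forb ℓ p₁ p₂) : ℝ) ≤ (2 : ℝ) ^ (k : ℕ) := by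
    refine le_trans part1 ?_
    rw [h2k, div_le_div_iff₀ (by positivity) (by positivity)]
    have hpow2 : (0 : ℝ) < 2 ^ ℓ := by positivity
    have h16 : (16 : ℝ) ≤ n := by exact_mod_cast hn
    have e7 : (2 : ℝ) ^ (ℓ + 1) = 2 * 2 ^ ℓ := by ring
    rw [e7]
    nlinarith [mul_le_mul_of_nonneg_left (show (16 : ℝ) * n ≤ n * n by nlinarith)
      hpow2.le]
  have hnat : Nat.card (Forb ℓ p₁ p₂) ≤ 2 ^ k := by exact_mod_cast hle
  haveI hfin : Finite (Forb ℓ p₁ p₂) :=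
    Set.Finite.to_subtype (himg ▸ (S.image (fun f => List.ofFn f)).finite_toSet)
  haveI : Fintype (Forb ℓ p₁ p₂) := Fintype.ofFinite _
  have hcards : Fintype.card (Forb ℓ p₁ p₂) ≤ Fintype.card (Fin k → Bool) := by
    rw [← Nat.card_eq_fintype_card, Fintype.card_fun, Fintype.card_bool, Fintype.card_fin]
    exact hnat
  obtain ⟨e⟩ := Function.Embedding.nonempty_of_card_le hcards
  exact ⟨e, e.injective⟩
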